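/- Let Ω be an n×n real matrix with Ω_{j k} ≥ 0 for all j ≠ k and all column sums zero, with basins N_1, …, N_{n_B} and N_B their union. Call a forest rooted in N_B 'pruned' if additionally every vertex of N_B is a fixed point of its parent function (no intra-basin edges are used). For each η define κ'_η ∈ ℝⁿ by: (κ'_η)_j = F' for j ∈ N_η, (κ'_η)_j = 0 for j ∈ N_B \ N_η, and (κ'_η)_l = F'_{η,l} for l ∉ N_B, where F' is the total weight of all pruned forests and F'_{η,l} is the total weight of those pruned forests that attach l to basin N_η. Then Ωᵀ · κ'_η = 0 for every η, and κ'_1, …, κ'_{n_B} form a basis of the kernel of Ωᵀ. -/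

import Mathlib

open Matrix
open scoped Classical

/-- Edge of the digraph `G_Ω`: for `k ≠ j`, there is an edge from `k` to `j` iff `Ω j k ≠ 0`. -/
def edgeRel {n : ℕ} (Ω : Matrix (Fin n) (Fin n) ℝ) (k j : Fin n) : Prop :=
  k ≠ j ∧ Ω j k ≠ 0

/-- Reachability in `G_Ω`: the reflexive-transitive closure of the edge relation. -/
def reaches {n : ℕ} (Ω : Matrix (Fin n) (Fin n) ℝ) : Fin n → Fin n → Prop :=
  Relation.ReflTransGen (edgeRel Ω)

/-- `S` is a strongly connected component of `G_Ω`. -/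
def IsSCC {n : ℕ} (Ω : Matrix (Fin n) (Fin n) ℝ) (S : Set (Fin n)) : Prop :=
  S.Nonempty ∧ ∀ u ∈ S, ∀ v : Fin n, (v ∈ S ↔ (reaches Ω u v ∧ reaches Ω v u))

/-- A basin: a strongly connected component with no outgoing edges. -/
def IsBasin {n : ℕ} (Ω : Matrix (Fin n) (Fin n) ℝ) (S : Set (Fin n)) : Prop :=
  IsSCC Ω S ∧ ∀ j ∈ S, ∀ k : Fin n, k ∉ S → Ω k j = 0

/-- `N_B`: the union of all basins of `G_Ω`. -/
def basinUnion {n : ℕ} (Ω : Matrix (Fin n) (Fin n) ℝ) : Set (Fin n) :=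
  {j | ∃ S : Set (Fin n), IsBasin Ω S ∧ j ∈ S}

/-- A parent function encoding a forest of `Fin n` rooted in `N_B`: every fixed point
lies in `N_B` and every vertex iterates to a fixed point. -/
def IsForest {n : ℕ} (Ω : Matrix (Fin n) (Fin n) ℝ) (p : Fin n → Fin n) : Prop :=
  (∀ v : Fin n, p v = v → v ∈ basinUnion Ω) ∧
    ∀ v : Fin n, ∃ m : ℕ, p (p^[m] v) = p^[m] v

/-- A pruned forest: a forest rooted in `N_B` in which every vertex of `N_B` is a
fixed point of the parent function (no intra-basin edges). -/
def IsPrunedForest {n : ℕ} (Ω : Matrix (Fin n) (Fin n) ℝ) (p : Fin n → Fin n) : Prop :=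
  IsForest Ω p ∧ ∀ v ∈ basinUnion Ω, p v = v

/-- The weight of a forest: the product of `Ω (p v) v` over its edges. -/
noncomputable def forestWt {n : ℕ} (Ω : Matrix (Fin n) (Fin n) ℝ) (p : Fin n → Fin n) : ℝ :=
  ∏ v ∈ Finset.univ.filter (fun v : Fin n => p v ≠ v), Ω (p v) v

/-- The forest `p` attaches the vertex `l` to the basin `S`. -/
def attachesTo {n : ℕ} (p : Fin n → Fin n) (S : Set (Fin n)) (l : Fin n) : Prop :=
  ∃ m : ℕ, p^[m] l ∈ S

/-- `F'`: the total weight of all pruned forests. -/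
noncomputable def prunedTotal {n : ℕ} (Ω : Matrix (Fin n) (Fin n) ℝ) : ℝ :=
  ∑ p ∈ Finset.univ.filter (fun p : Fin n → Fin n => IsPrunedForest Ω p), forestWt Ω p

/-- `F'_{η,l}`: the total weight of the pruned forests attaching `l` to basin `S`. -/
noncomputable def prunedAttach {n : ℕ} (Ω : Matrix (Fin n) (Fin n) ℝ) (S : Set (Fin n))
    (l : Fin n) : ℝ :=
  ∑ p ∈ Finset.univ.filter
      (fun p : Fin n → Fin n => IsPrunedForest Ω p ∧ attachesTo p S l),
    forestWt Ω p

/-- The constraint vector `κ'_η` associated with the basin `S`. -/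
noncomputable def kappaP {n : ℕ} (Ω : Matrix (Fin n) (Fin n) ℝ) (S : Set (Fin n)) :
    Fin n → ℝ :=
  fun j => if j ∈ S then prunedTotal Ω
    else if j ∈ basinUnion Ω then 0 else prunedAttach Ω S j

section Aux
variable {n : ℕ} (Ω : Matrix (Fin n) (Fin n) ℝ)

lemma basin_eq {S T : Set (Fin n)} (hS : IsBasin Ω S) (hT : IsBasin Ω T)
    {x : Fin n} (hxS : x ∈ S) (hxT : x ∈ T) : S = T :=
  Set.ext fun v => (hS.1.2 x hxS v).trans (hT.1.2 x hxT v).symm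

lemma exists_reach_basin (v : Fin n) : ∃ b, reaches Ω v b ∧ b ∈ basinUnion Ω := by
  classical
  set F : Fin n → Finset (Fin n) := fun u => Finset.univ.filter (fun w => reaches Ω u w) with hF
  obtain ⟨u, hu, hmin⟩ := Finset.exists_min_image (F v) (fun u => (F u).card)
    ⟨v, by simp [hF, reaches]; exact Finset.mem_filter.mpr ⟨Finset.mem_univ _, Relation.ReflTransGen.refl⟩⟩
  have huv : reaches Ω v u := by simpa [hF] using hu
  have key : ∀ w, reaches Ω u w → reaches Ω w u := by
    intro w hw
    have hsub : F w ⊆ F u := by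
      intro a ha
      simp only [hF, Finset.mem_filter, Finset.mem_univ, true_and] at ha ⊢
      exact hw.trans ha
    have hwv : w ∈ F v := by
      simp only [hF, Finset.mem_filter, Finset.mem_univ, true_and]
      exact huv.trans hw
    have hcard := hmin w hwv
    have heq : F w = F u := Finset.eq_of_subset_of_card_le hsub hcard
    have hu' : u ∈ F w := heq ▸ (by simp [hF, reaches]; exact Finset.mem_filter.mpr ⟨Finset.mem_univ _, Relation.ReflTransGen.refl⟩ : u ∈ F u)
    simpa [hF] using hu'
  refine ⟨u, huv, ⟨{w | reaches Ω u w}, ⟨⟨⟨u, Relation.ReflTransGen.refl⟩, ?_⟩, ?_⟩,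
    Relation.ReflTransGen.refl⟩⟩
  · intro a ha b
    constructor
    · intro hb
      exact ⟨(key a ha).trans hb, (key b hb).trans ha⟩
    · rintro ⟨hab, -⟩
      exact (ha : reaches Ω u a).trans hab
  · intro j hj m hm
    by_contra hΩ
    have hjm : j ≠ m := fun h => hm (h ▸ hj)
    exact hm ((hj : reaches Ω u j).trans (Relation.ReflTransGen.single ⟨hjm, hΩ⟩))


end Aux

section Aux2
variable {n : ℕ} (Ω : Matrix (Fin n) (Fin n) ℝ)

lemma forest_stab {p : Fin n → Fin n} (hf : IsForest Ω p) (v : Fin n) :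
    ∃ m, p (p^[m] v) = p^[m] v ∧ ∀ s, m ≤ s → p^[s] v = p^[m] v := by
  obtain ⟨m, hm⟩ := hf.2 v
  refine ⟨m, hm, fun s hs => ?_⟩
  obtain ⟨t, rfl⟩ := Nat.exists_eq_add_of_le hs
  rw [Nat.add_comm, Function.iterate_add_apply, Function.iterate_fixed hm t]

lemma no_period {p : Fin n → Fin n} (hf : IsForest Ω p) {v : Fin n} {t : ℕ}
    (hv : p^[t + 1] v = v) : p v = v := by
  obtain ⟨m, hm, hs⟩ := forest_stab Ω hf v
  have hper : p^[(t + 1) * (m + 1)] v = v := by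
    rw [Function.iterate_mul]
    exact Function.iterate_fixed hv (m + 1)
  have hge : m ≤ (t + 1) * (m + 1) := by nlinarith
  have hvm : p^[m] v = v := (hs _ hge).symm.trans hper
  rw [hvm] at hm
  exact hm

lemma pruned_iterate_fixed {p : Fin n → Fin n} (hp : IsPrunedForest Ω p) {j : Fin n}
    (hj : j ∈ basinUnion Ω) (m : ℕ) : p^[m] j = j :=
  Function.iterate_fixed (hp.2 j hj) m

lemma pk_ne {p : Fin n → Fin n} (hf : IsForest Ω p) {k : Fin n}
    (hk : k ∉ basinUnion Ω) : p k ≠ k := fun h => hk (hf.1 k h)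

lemma pk_avoid {p : Fin n → Fin n} (hf : IsForest Ω p) {k : Fin n}
    (hk : k ∉ basinUnion Ω) : ∀ t, p^[t] (p k) ≠ k := by
  intro t ht
  have h1 : p^[t + 1] k = k := by rw [Function.iterate_succ_apply]; exact ht
  exact hk (hf.1 k (no_period Ω hf h1))

lemma update_iterate {p : Fin n → Fin n} {k j : Fin n} (m : ℕ) (v : Fin n)
    (h : ∀ i, i < m → p^[i] v ≠ k) : (Function.update p k j)^[m] v = p^[m] v := by
  induction m with
  | zero => rfl
  | succ m ih =>
    rw [Function.iterate_succ_apply', Function.iterate_succ_apply',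
      ih (fun i hi => h i (hi.trans (Nat.lt_succ_self m))),
      Function.update_of_ne (h m (Nat.lt_succ_self m))]

lemma avoid1 {S : Set (Fin n)} {p : Fin n → Fin n} {k j : Fin n}
    (hk : k ∉ basinUnion Ω) (hpr : IsPrunedForest Ω p)
    (hSB : ∀ s ∈ S, s ∈ basinUnion Ω)
    (hatt : attachesTo p S j) (hnatt : ¬ attachesTo p S k) :
    ∀ t, p^[t] j ≠ k := by
  intro t ht
  obtain ⟨m, hm⟩ := hatt
  rcases le_or_gt t m with h | h
  · refine hnatt ⟨m - t, ?_⟩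
    rw [← ht, ← Function.iterate_add_apply, Nat.sub_add_cancel h]
    exact hm
  · have hfix : p (p^[m] j) = p^[m] j := hpr.2 _ (hSB _ hm)
    have heq : p^[t] j = p^[m] j := by
      conv_lhs => rw [show t = (t - m) + m from (Nat.sub_add_cancel h.le).symm]
      rw [Function.iterate_add_apply, Function.iterate_fixed hfix]
    apply hk
    rw [← ht, heq]
    exact hSB _ hm

lemma avoid2 {S : Set (Fin n)} {p : Fin n → Fin n} {k j : Fin n}
    (hnatt : ¬ attachesTo p S j) (hatt : attachesTo p S k) :
    ∀ t, p^[t] j ≠ k := by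
  intro t ht
  obtain ⟨m, hm⟩ := hatt
  refine hnatt ⟨m + t, ?_⟩
  rw [Function.iterate_add_apply, ht]
  exact hm

lemma update_forest {p : Fin n → Fin n} {k j : Fin n} (hk : k ∉ basinUnion Ω)
    (hpr : IsPrunedForest Ω p) (hjk : j ≠ k) (hav : ∀ t, p^[t] j ≠ k) :
    IsPrunedForest Ω (Function.update p k j) := by
  set q := Function.update p k j with hq
  have hqk : q k = j := Function.update_self k j p
  have hqv : ∀ v, v ≠ k → q v = p v := fun v hv => Function.update_of_ne hv j p
  refine ⟨⟨?_, ?_⟩, ?_⟩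
  · intro v hv
    by_cases h : v = k
    · subst h
      rw [hqk] at hv
      exact absurd hv hjk
    · rw [hqv v h] at hv
      exact hpr.1.1 v hv
  · intro v
    by_cases hall : ∀ i, p^[i] v ≠ k
    · obtain ⟨m, hm⟩ := hpr.1.2 v
      refine ⟨m, ?_⟩
      show q (q^[m] v) = q^[m] v
      rw [hq, update_iterate m v (fun i _ => hall i)]
      rw [show Function.update p k j (p^[m] v) = p (p^[m] v) from hqv _ (hall m), hm]
    · push_neg at hall
      have hex : ∃ i, p^[i] v = k := hall
      set t := Nat.find hex with htdef
      have htk : p^[t] v = k := Nat.find_spec hex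
      have htmin : ∀ i, i < t → p^[i] v ≠ k := fun i hi => Nat.find_min hex hi
      have h1 : q^[t + 1] v = j := by
        rw [Function.iterate_succ_apply', hq, update_iterate t v htmin, htk]
        exact Function.update_self k j p
      obtain ⟨m, hm⟩ := hpr.1.2 j
      refine ⟨m + (t + 1), ?_⟩
      have h2 : q^[m + (t + 1)] v = p^[m] j := by
        rw [Function.iterate_add_apply, h1, hq, update_iterate m j (fun i _ => hav i)]
      show q (q^[m + (t+1)] v) = q^[m + (t+1)] v
      rw [h2, hqv _ (hav m), hm]
  · intro v hv
    have hvk : v ≠ k := fun h => hk (h ▸ hv)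
    rw [hqv v hvk]
    exact hpr.2 v hv


lemma update_wt {p : Fin n → Fin n} {k j : Fin n} (hpk : p k ≠ k) (hjk : j ≠ k) :
    Ω (p k) k * forestWt Ω (Function.update p k j) = Ω j k * forestWt Ω p := by
  classical
  set q := Function.update p k j with hq
  have hqk : q k = j := Function.update_self k j p
  have hqv : ∀ v, v ≠ k → q v = p v := fun v hv => Function.update_of_ne hv j p
  have hset : Finset.univ.filter (fun v => q v ≠ v) = Finset.univ.filter (fun v => p v ≠ v) := by
    ext v
    simp only [Finset.mem_filter, Finset.mem_univ, true_and]
    by_cases h : v = k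
    · subst h
      rw [hqk]
      exact ⟨fun _ => hpk, fun _ => hjk⟩
    · rw [hqv v h]
  have hkmem : k ∈ Finset.univ.filter (fun v => p v ≠ v) := by
    simp [hpk]
  unfold forestWt
  rw [hset, ← Finset.mul_prod_erase _ (fun v => Ω (q v) v) hkmem,
    ← Finset.mul_prod_erase _ (fun v => Ω (p v) v) hkmem]
  have hsame : ∀ v ∈ (Finset.univ.filter (fun v => p v ≠ v)).erase k,
      Ω (q v) v = Ω (p v) v := fun v hv => by
    rw [hqv v (Finset.ne_of_mem_erase hv)]
  rw [Finset.prod_congr rfl hsame, hqk]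
  ring

lemma att_q_k {S : Set (Fin n)} {p : Fin n → Fin n} {k j : Fin n}
    (hatt : attachesTo p S j) (hav : ∀ t, p^[t] j ≠ k) (hjk : j ≠ k) :
    attachesTo (Function.update p k j) S k := by
  obtain ⟨m, hm⟩ := hatt
  refine ⟨m + 1, ?_⟩
  rw [Function.iterate_succ_apply, Function.update_self, update_iterate m j (fun i _ => hav i)]
  exact hm

lemma natt_q_pk {S : Set (Fin n)} {p : Fin n → Fin n} {k j : Fin n}
    (hf : IsForest Ω p) (hk : k ∉ basinUnion Ω)
    (hnatt : ¬ attachesTo p S k) :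
    ¬ attachesTo (Function.update p k j) S (p k) := by
  rintro ⟨m, hm⟩
  rw [update_iterate m (p k) (fun i _ => pk_avoid Ω hf hk i)] at hm
  refine hnatt ⟨m + 1, ?_⟩
  rw [Function.iterate_succ_apply]
  exact hm

lemma att_q_pk {S : Set (Fin n)} {p : Fin n → Fin n} {k : Fin n} {j : Fin n}
    (hf : IsForest Ω p) (hk : k ∉ basinUnion Ω) (hSB : ∀ s ∈ S, s ∈ basinUnion Ω)
    (hatt : attachesTo p S k) :
    attachesTo (Function.update p k j) S (p k) := by
  obtain ⟨m, hm⟩ := hatt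
  cases m with
  | zero => exact absurd (hSB _ hm) hk
  | succ m' =>
    refine ⟨m', ?_⟩
    rw [update_iterate m' (p k) (fun i _ => pk_avoid Ω hf hk i), ← Function.iterate_succ_apply]
    exact hm

lemma natt_q_k {S : Set (Fin n)} {p : Fin n → Fin n} {k j : Fin n}
    (hk : k ∉ basinUnion Ω) (hSB : ∀ s ∈ S, s ∈ basinUnion Ω)
    (hnatt : ¬ attachesTo p S j) (hav : ∀ t, p^[t] j ≠ k) :
    ¬ attachesTo (Function.update p k j) S k := by
  rintro ⟨m, hm⟩
  cases m with
  | zero => exact hk (hSB _ hm)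
  | succ m' =>
    rw [Function.iterate_succ_apply, Function.update_self,
      update_iterate m' j (fun i _ => hav i)] at hm
    exact hnatt ⟨m', hm⟩


lemma expand_sum (k : Fin n) (P : Fin n → (Fin n → Fin n) → Prop) :
    ∑ j ∈ Finset.univ.erase k, Ω j k *
        (∑ p ∈ Finset.univ.filter (fun p => IsPrunedForest Ω p ∧ P j p), forestWt Ω p)
      = ∑ x ∈ (Finset.univ.filter
          (fun x : Fin n × (Fin n → Fin n) => x.1 ≠ k ∧ IsPrunedForest Ω x.2 ∧ P x.1 x.2)),
          Ω x.1 k * forestWt Ω x.2 := by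
  classical
  rw [Finset.sum_filter, Fintype.sum_prod_type, ← Finset.filter_ne']
  rw [Finset.sum_filter]
  refine Finset.sum_congr rfl fun j _ => ?_
  by_cases hj : j = k
  · simp [hj]
  · simp [hj, Finset.mul_sum, Finset.sum_filter, mul_ite, mul_zero, ite_and]

lemma key_sum (hoff : ∀ j k : Fin n, j ≠ k → 0 ≤ Ω j k)
    {S : Set (Fin n)} (hS : IsBasin Ω S) {k : Fin n} (hk : k ∉ basinUnion Ω) :
    ∑ j ∈ Finset.univ.erase k, Ω j k * prunedAttach Ω S j
      = ∑ j ∈ Finset.univ.erase k, Ω j k * prunedAttach Ω S k := by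
  classical
  have hSB : ∀ s ∈ S, s ∈ basinUnion Ω := fun s hs => ⟨S, hS, hs⟩
  have e1 := expand_sum Ω k (fun j p => attachesTo p S j)
  have e2 := expand_sum Ω k (fun _ p => attachesTo p S k)
  have hL : ∑ j ∈ Finset.univ.erase k, Ω j k * prunedAttach Ω S j
      = ∑ x ∈ (Finset.univ.filter
          (fun x : Fin n × (Fin n → Fin n) =>
            x.1 ≠ k ∧ IsPrunedForest Ω x.2 ∧ attachesTo x.2 S x.1)),
          Ω x.1 k * forestWt Ω x.2 := e1
  have hR : ∑ j ∈ Finset.univ.erase k, Ω j k * prunedAttach Ω S k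
      = ∑ x ∈ (Finset.univ.filter
          (fun x : Fin n × (Fin n → Fin n) =>
            x.1 ≠ k ∧ IsPrunedForest Ω x.2 ∧ attachesTo x.2 S k)),
          Ω x.1 k * forestWt Ω x.2 := e2
  rw [hL, hR]
  rw [← Finset.sum_filter_add_sum_filter_not
    (Finset.univ.filter (fun x : Fin n × (Fin n → Fin n) =>
      x.1 ≠ k ∧ IsPrunedForest Ω x.2 ∧ attachesTo x.2 S x.1))
    (fun x => attachesTo x.2 S k)]
  rw [← Finset.sum_filter_add_sum_filter_not
    (Finset.univ.filter (fun x : Fin n × (Fin n → Fin n) =>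
      x.1 ≠ k ∧ IsPrunedForest Ω x.2 ∧ attachesTo x.2 S k))
    (fun x => attachesTo x.2 S x.1)]
  simp only [Finset.filter_filter]
  have hcommon : Finset.univ.filter (fun x : Fin n × (Fin n → Fin n) =>
        (x.1 ≠ k ∧ IsPrunedForest Ω x.2 ∧ attachesTo x.2 S x.1) ∧ attachesTo x.2 S k)
      = Finset.univ.filter (fun x : Fin n × (Fin n → Fin n) =>
        (x.1 ≠ k ∧ IsPrunedForest Ω x.2 ∧ attachesTo x.2 S k) ∧ attachesTo x.2 S x.1) := by
    apply Finset.filter_congr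
    intro x _
    constructor <;> (rintro ⟨⟨h1, h2, h3⟩, h4⟩; exact ⟨⟨h1, h2, h4⟩, h3⟩)
  rw [hcommon]
  congr 1
  -- the involution between the two difference regions
  refine Finset.sum_nbij' (i := fun x : Fin n × (Fin n → Fin n) =>
      (x.2 k, Function.update x.2 k x.1))
    (j := fun x : Fin n × (Fin n → Fin n) => (x.2 k, Function.update x.2 k x.1))
    ?_ ?_ ?_ ?_ ?_
  · rintro ⟨j, p⟩ hx
    simp only [Finset.mem_filter, Finset.mem_univ, true_and] at hx ⊢
    obtain ⟨⟨hjk, hpr, hatt⟩, hnatt⟩ := hx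
    have hav : ∀ t, p^[t] j ≠ k := avoid1 Ω hk hpr hSB hatt hnatt
    refine ⟨⟨pk_ne Ω hpr.1 hk, update_forest Ω hk hpr hjk hav, ?_⟩, ?_⟩
    · exact att_q_k hatt hav hjk
    · exact natt_q_pk Ω hpr.1 hk hnatt
  · rintro ⟨j, p⟩ hx
    simp only [Finset.mem_filter, Finset.mem_univ, true_and] at hx ⊢
    obtain ⟨⟨hjk, hpr, hatt⟩, hnatt⟩ := hx
    have hav : ∀ t, p^[t] j ≠ k := avoid2 hnatt hatt
    refine ⟨⟨pk_ne Ω hpr.1 hk, update_forest Ω hk hpr hjk hav, ?_⟩, ?_⟩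
    · exact att_q_pk Ω hpr.1 hk hSB hatt
    · exact natt_q_k Ω hk hSB hnatt hav
  · rintro ⟨j, p⟩ _
    show ((Function.update p k j) k, Function.update (Function.update p k j) k (p k)) = (j, p)
    rw [Function.update_self, Function.update_idem, Function.update_eq_self]
  · rintro ⟨j, p⟩ _
    show ((Function.update p k j) k, Function.update (Function.update p k j) k (p k)) = (j, p)
    rw [Function.update_self, Function.update_idem, Function.update_eq_self]
  · rintro ⟨j, p⟩ hx
    simp only [Finset.mem_filter, Finset.mem_univ, true_and] at hx
    obtain ⟨⟨hjk, hpr, hatt⟩, hnatt⟩ := hx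
    show Ω j k * forestWt Ω p = Ω (p k) k * forestWt Ω (Function.update p k j)
    exact (update_wt Ω (pk_ne Ω hpr.1 hk) hjk).symm


lemma kappa_eq_attach (S : Set (Fin n)) (j : Fin n) :
    kappaP Ω S j = prunedAttach Ω S j := by
  classical
  unfold kappaP
  by_cases hjS : j ∈ S
  · rw [if_pos hjS]
    unfold prunedTotal prunedAttach
    refine Finset.sum_congr ?_ fun _ _ => rfl
    apply Finset.filter_congr
    intro p _
    exact ⟨fun h => ⟨h, ⟨0, hjS⟩⟩, And.left⟩
  · rw [if_neg hjS]
    by_cases hjB : j ∈ basinUnion Ω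
    · rw [if_pos hjB]
      symm
      refine Finset.sum_eq_zero fun p hp => ?_
      simp only [Finset.mem_filter, Finset.mem_univ, true_and] at hp
      obtain ⟨hpr, m, hm⟩ := hp
      rw [pruned_iterate_fixed Ω hpr hjB m] at hm
      exact absurd hm hjS
    · rw [if_neg hjB]

lemma part1 (hoff : ∀ j k : Fin n, j ≠ k → 0 ≤ Ω j k)
    (hcol : ∀ k : Fin n, ∑ j, Ω j k = 0)
    (S : Set (Fin n)) (hS : IsBasin Ω S) : Ωᵀ.mulVec (kappaP Ω S) = 0 := by
  classical
  funext k
  show ∑ j, Ω j k * kappaP Ω S j = 0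
  by_cases hk : k ∈ basinUnion Ω
  · obtain ⟨T, hT, hkT⟩ := hk
    have hzero : ∀ j, j ∉ T → Ω j k = 0 := fun j hj => hT.2 k hkT j hj
    have hconst : ∀ j ∈ T, kappaP Ω S j = kappaP Ω S k := by
      intro j hj
      by_cases hkS : k ∈ S
      · have hST : S = T := basin_eq Ω hS hT hkS hkT
        have hjS : j ∈ S := hST ▸ hj
        simp [kappaP, hjS, hkS]
      · have hjS : j ∉ S := fun hjS => hkS ((basin_eq Ω hS hT hjS hj) ▸ hkT)
        simp [kappaP, hjS, hkS, show j ∈ basinUnion Ω from ⟨T, hT, hj⟩,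
          show k ∈ basinUnion Ω from ⟨T, hT, hkT⟩]
    calc ∑ j, Ω j k * kappaP Ω S j = ∑ j, Ω j k * kappaP Ω S k := by
          refine Finset.sum_congr rfl fun j _ => ?_
          by_cases hj : j ∈ T
          · rw [hconst j hj]
          · rw [hzero j hj, zero_mul, zero_mul]
      _ = (∑ j, Ω j k) * kappaP Ω S k := by rw [Finset.sum_mul]
      _ = 0 := by rw [hcol k, zero_mul]
  · simp only [kappa_eq_attach]
    rw [← Finset.add_sum_erase Finset.univ (fun j => Ω j k * prunedAttach Ω S j)
      (Finset.mem_univ k)]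
    rw [key_sum Ω hoff hS hk, ← Finset.sum_mul]
    have hdiag : Ω k k + ∑ j ∈ Finset.univ.erase k, Ω j k = 0 := by
      rw [Finset.add_sum_erase Finset.univ (fun j => Ω j k) (Finset.mem_univ k)]
      exact hcol k
    have : (∑ j ∈ Finset.univ.erase k, Ω j k) = -Ω k k := by linarith
    rw [this]
    ring


/-- `closeTo Ω m v`: `v` can reach the basin union in at most `m` steps. -/
def closeTo : ℕ → Fin n → Prop
  | 0 => fun v => v ∈ basinUnion Ω
  | (m + 1) => fun v => closeTo m v ∨ ∃ w, edgeRel Ω v w ∧ closeTo m w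

lemma closeTo_exists (v : Fin n) : ∃ m, closeTo Ω m v := by
  obtain ⟨b, hvb, hb⟩ := exists_reach_basin Ω v
  induction hvb using Relation.ReflTransGen.head_induction_on with
  | refl => exact ⟨0, hb⟩
  | head e _ ih =>
    obtain ⟨m, hm⟩ := ih
    exact ⟨m + 1, Or.inr ⟨_, e, hm⟩⟩

noncomputable def distB (v : Fin n) : ℕ := Nat.find (closeTo_exists Ω v)

lemma distB_step {v : Fin n} (hv : v ∉ basinUnion Ω) :
    ∃ w, edgeRel Ω v w ∧ distB Ω w < distB Ω v := by
  have h0 : closeTo Ω (distB Ω v) v := Nat.find_spec (closeTo_exists Ω v)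
  have hne : distB Ω v ≠ 0 := by
    intro h
    rw [h] at h0
    exact hv h0
  obtain ⟨m, hm⟩ := Nat.exists_eq_succ_of_ne_zero hne
  rw [hm] at h0
  rcases h0 with h | ⟨w, he, hw⟩
  · refine absurd h (Nat.find_min (closeTo_exists Ω v) ?_)
    show m < distB Ω v
    omega
  · exact ⟨w, he, lt_of_le_of_lt (Nat.find_le hw) (hm ▸ Nat.lt_succ_self m)⟩

noncomputable def p0 : Fin n → Fin n := fun v =>
  if h : v ∈ basinUnion Ω then v else (distB_step Ω h).choose

lemma p0_mem (v : Fin n) (hv : v ∈ basinUnion Ω) : p0 Ω v = v := dif_pos hv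

lemma p0_spec {v : Fin n} (hv : v ∉ basinUnion Ω) :
    edgeRel Ω v (p0 Ω v) ∧ distB Ω (p0 Ω v) < distB Ω v := by
  rw [show p0 Ω v = (distB_step Ω hv).choose from dif_neg hv]
  exact (distB_step Ω hv).choose_spec

lemma p0_pruned : IsPrunedForest Ω (p0 Ω) := by
  refine ⟨⟨?_, ?_⟩, p0_mem Ω⟩
  · intro v hv
    by_contra h
    exact ((p0_spec Ω h).1.1 : v ≠ p0 Ω v) hv.symm
  · intro v
    have : ∀ N v, distB Ω v ≤ N → ∃ m, p0 Ω ((p0 Ω)^[m] v) = (p0 Ω)^[m] v := by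
      intro N
      induction N with
      | zero =>
        intro v hv
        have h0 : closeTo Ω 0 v := by
          have h1 := Nat.find_spec (closeTo_exists Ω v)
          have h2 : distB Ω v = 0 := Nat.le_zero.mp hv
          rwa [show Nat.find (closeTo_exists Ω v) = 0 from h2] at h1
        exact ⟨0, p0_mem Ω v h0⟩
      | succ N ih =>
        intro v hv
        by_cases h : v ∈ basinUnion Ω
        · exact ⟨0, p0_mem Ω v h⟩
        · have hlt := (p0_spec Ω h).2
          obtain ⟨m, hm⟩ := ih (p0 Ω v) (by omega)
          exact ⟨m + 1, by rwa [Function.iterate_succ_apply]⟩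
    exact this (distB Ω v) v le_rfl

lemma p0_wt_pos (hoff : ∀ j k : Fin n, j ≠ k → 0 ≤ Ω j k) : 0 < forestWt Ω (p0 Ω) := by
  refine Finset.prod_pos fun v hv => ?_
  simp only [Finset.mem_filter, Finset.mem_univ, true_and] at hv
  have hvB : v ∉ basinUnion Ω := fun h => hv (p0_mem Ω v h)
  have he := (p0_spec Ω hvB).1
  exact lt_of_le_of_ne (hoff _ _ (fun h => hv h)) (Ne.symm he.2)

lemma wt_nonneg (hoff : ∀ j k : Fin n, j ≠ k → 0 ≤ Ω j k) (p : Fin n → Fin n) :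
    0 ≤ forestWt Ω p := by
  refine Finset.prod_nonneg fun v hv => ?_
  simp only [Finset.mem_filter, Finset.mem_univ, true_and] at hv
  exact hoff _ _ hv

lemma prunedTotal_pos (hoff : ∀ j k : Fin n, j ≠ k → 0 ≤ Ω j k) : 0 < prunedTotal Ω := by
  refine Finset.sum_pos' (fun p _ => wt_nonneg Ω hoff p) ⟨p0 Ω, ?_, p0_wt_pos Ω hoff⟩
  simp [p0_pruned Ω]


def IsHarm (x : Fin n → ℝ) : Prop := ∀ k, ∑ j, Ω j k * x j = 0

lemma propagate (hoff : ∀ j k : Fin n, j ≠ k → 0 ≤ Ω j k)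
    (hcol : ∀ k : Fin n, ∑ j, Ω j k = 0) {x : Fin n → ℝ} {k : Fin n}
    (hx : ∑ j, Ω j k * x j = 0)
    (hmax : ∀ j, j ≠ k → Ω j k ≠ 0 → x j ≤ x k) :
    ∀ j, j ≠ k → Ω j k ≠ 0 → x j = x k := by
  classical
  have hdiag : Ω k k + ∑ j ∈ Finset.univ.erase k, Ω j k = 0 := by
    rw [Finset.add_sum_erase Finset.univ (fun j => Ω j k) (Finset.mem_univ k)]
    exact hcol k
  have hx' : Ω k k * x k + ∑ j ∈ Finset.univ.erase k, Ω j k * x j = 0 := by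
    rw [Finset.add_sum_erase Finset.univ (fun j => Ω j k * x j) (Finset.mem_univ k)]
    exact hx
  have hsplit : ∑ j ∈ Finset.univ.erase k, Ω j k * (x j - x k) = 0 := by
    have e1 : ∑ j ∈ Finset.univ.erase k, Ω j k * (x j - x k)
        = (∑ j ∈ Finset.univ.erase k, Ω j k * x j)
          - (∑ j ∈ Finset.univ.erase k, Ω j k) * x k := by
      rw [Finset.sum_mul, ← Finset.sum_sub_distrib]
      exact Finset.sum_congr rfl fun j _ => by ring
    rw [e1]
    have h2 : ∑ j ∈ Finset.univ.erase k, Ω j k = -Ω k k := by linarith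
    rw [h2]
    linarith
  have hterms := (Finset.sum_eq_zero_iff_of_nonpos ?_).mp hsplit
  · intro j hjk hΩ
    have hj : j ∈ Finset.univ.erase k := Finset.mem_erase.mpr ⟨hjk, Finset.mem_univ j⟩
    have := hterms j hj
    have : x j - x k = 0 := by
      rcases mul_eq_zero.mp this with h | h
      · exact absurd h hΩ
      · exact h
    linarith
  · intro j hj
    have hjk : j ≠ k := (Finset.mem_erase.mp hj).1
    by_cases hΩ : Ω j k = 0
    · rw [hΩ]; ring_nf; rfl
    · have h1 : 0 ≤ Ω j k := hoff j k hjk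
      have h2 : x j - x k ≤ 0 := by linarith [hmax j hjk hΩ]
      exact mul_nonpos_of_nonneg_of_nonpos h1 h2

lemma reach_max (hoff : ∀ j k : Fin n, j ≠ k → 0 ≤ Ω j k)
    (hcol : ∀ k : Fin n, ∑ j, Ω j k = 0) {x : Fin n → ℝ} (hx : IsHarm Ω x)
    {k : Fin n} (hmax : ∀ j, x j ≤ x k) :
    ∀ v, reaches Ω k v → x v = x k := by
  intro v h
  induction h with
  | refl => rfl
  | tail hkw e ih =>
    rename_i w v'
    have hmax' : ∀ j, j ≠ w → Ω j w ≠ 0 → x j ≤ x w := fun j _ _ => (hmax j).trans_eq ih.symm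
    have := propagate Ω hoff hcol (hx w) hmax' v' (Ne.symm e.1) e.2
    rw [this, ih]

lemma harm_zero (hoff : ∀ j k : Fin n, j ≠ k → 0 ≤ Ω j k)
    (hcol : ∀ k : Fin n, ∑ j, Ω j k = 0) {x : Fin n → ℝ} (hx : IsHarm Ω x)
    (hB : ∀ v ∈ basinUnion Ω, x v = 0) : x = 0 := by
  have hbound : ∀ (y : Fin n → ℝ), IsHarm Ω y → (∀ v ∈ basinUnion Ω, y v = 0) →
      ∀ v, y v ≤ 0 := by
    intro y hy hyB v
    obtain ⟨m, -, hmax⟩ := Finset.exists_max_image Finset.univ y ⟨v, Finset.mem_univ v⟩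
    obtain ⟨b, hmb, hbB⟩ := exists_reach_basin Ω m
    have h1 : y b = y m := reach_max Ω hoff hcol hy (fun j => hmax j (Finset.mem_univ j)) b hmb
    have h2 : y b = 0 := hyB b hbB
    have := hmax v (Finset.mem_univ v)
    linarith
  have hneg : IsHarm Ω (-x) := by
    intro k
    have := hx k
    simp only [Pi.neg_apply, mul_neg]
    rw [Finset.sum_neg_distrib, this, neg_zero]
  funext v
  have h1 := hbound x hx hB v
  have h2 := hbound (-x) hneg (fun u hu => by simp [hB u hu]) v
  simp only [Pi.neg_apply] at h2
  show x v = 0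
  linarith

lemma basin_const (hoff : ∀ j k : Fin n, j ≠ k → 0 ≤ Ω j k)
    (hcol : ∀ k : Fin n, ∑ j, Ω j k = 0) {S : Set (Fin n)} (hS : IsBasin Ω S)
    {x : Fin n → ℝ} (hx : IsHarm Ω x) :
    ∀ a ∈ S, ∀ b ∈ S, x a = x b := by
  classical
  obtain ⟨m, hmS, hmax⟩ := Finset.exists_max_image (Finset.univ.filter (· ∈ S)) x
    (by
      obtain ⟨u, hu⟩ := hS.1.1
      exact ⟨u, by simp [hu]⟩)
  have hmS' : m ∈ S := by simpa using hmS
  have hmaxS : ∀ j ∈ S, x j ≤ x m := fun j hj => hmax j (by simpa using hj)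
  have key : ∀ v, reaches Ω m v → v ∈ S ∧ x v = x m := by
    intro v h
    induction h with
    | refl => exact ⟨hmS', rfl⟩
    | tail hkw e ih =>
      rename_i w v'
      obtain ⟨hwS, hxw⟩ := ih
      have hv'S : v' ∈ S := by
        by_contra hv'
        exact e.2 (hS.2 w hwS v' hv')
      have hmax' : ∀ j, j ≠ w → Ω j w ≠ 0 → x j ≤ x w := by
        intro j hjw hΩ
        have hjS : j ∈ S := by
          by_contra hj
          exact hΩ (hS.2 w hwS j hj)
        rw [hxw]
        exact hmaxS j hjS
      have := propagate Ω hoff hcol (hx w) hmax' v' (Ne.symm e.1) e.2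
      rw [this, hxw]
      exact ⟨hv'S, rfl⟩
  intro a ha b hb
  have h1 := key a ((hS.1.2 m hmS' a).mp ha).1
  have h2 := key b ((hS.1.2 m hmS' b).mp hb).1
  rw [h1.2, h2.2]


lemma harm_of_ker {x : Fin n → ℝ} (hx : Ωᵀ.mulVec x = 0) : IsHarm Ω x := by
  intro k
  have := congrFun hx k
  simpa [Matrix.mulVec, dotProduct, Matrix.transpose_apply] using this

lemma kappa_basin_val {S : Set (Fin n)} (hS : IsBasin Ω S) {T : Set (Fin n)}
    (hT : IsBasin Ω T) {v : Fin n} (hv : v ∈ T) :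
    kappaP Ω S v = if S = T then prunedTotal Ω else 0 := by
  by_cases h : S = T
  · subst h
    simp [kappaP, hv]
  · have hvS : v ∉ S := fun hvS => h (basin_eq Ω hS hT hvS hv)
    simp [kappaP, hvS, h, show v ∈ basinUnion Ω from ⟨T, hT, hv⟩]

end Aux2


theorem stmt9 (n : ℕ) (Ω : Matrix (Fin n) (Fin n) ℝ)
    (hoff : ∀ j k : Fin n, j ≠ k → 0 ≤ Ω j k)
    (hcol : ∀ k : Fin n, ∑ j, Ω j k = 0) :
    (∀ S : Set (Fin n), IsBasin Ω S → Ωᵀ.mulVec (kappaP Ω S) = 0) ∧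
    LinearIndependent ℝ (fun η : {S : Set (Fin n) // IsBasin Ω S} => kappaP Ω η.1) ∧
    Submodule.span ℝ (Set.range fun η : {S : Set (Fin n) // IsBasin Ω S} => kappaP Ω η.1) =
      LinearMap.ker (Ωᵀ).mulVecLin := by
  classical
  have hker : ∀ S : Set (Fin n), IsBasin Ω S → Ωᵀ.mulVec (kappaP Ω S) = 0 :=
    fun S hS => part1 Ω hoff hcol S hS
  have hFpos : 0 < prunedTotal Ω := prunedTotal_pos Ω hoff
  have hFne : prunedTotal Ω ≠ 0 := ne_of_gt hFpos
  -- representatives of basins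
  have hrep : ∀ η : {S : Set (Fin n) // IsBasin Ω S}, η.2.1.1.choose ∈ η.1 :=
    fun η => η.2.1.1.choose_spec
  -- evaluation of sums of kappas at a basin point
  have heval : ∀ (c : {S : Set (Fin n) // IsBasin Ω S} → ℝ)
      (η₀ : {S : Set (Fin n) // IsBasin Ω S}) (v : Fin n), v ∈ η₀.1 →
      (∑ η, c η • kappaP Ω η.1) v = c η₀ * prunedTotal Ω := by
    intro c η₀ v hv
    rw [Finset.sum_apply]
    rw [Finset.sum_eq_single η₀]
    · simp only [Pi.smul_apply, smul_eq_mul]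
      rw [kappa_basin_val Ω η₀.2 η₀.2 hv, if_pos rfl]
    · intro η _ hne
      simp only [Pi.smul_apply, smul_eq_mul]
      rw [kappa_basin_val Ω η.2 η₀.2 hv,
        if_neg (fun h => hne (Subtype.ext h)), mul_zero]
    · intro h
      exact absurd (Finset.mem_univ η₀) h
  refine ⟨hker, ?_, ?_⟩
  · rw [Fintype.linearIndependent_iff]
    intro g hg η₀
    have := congrFun hg (η₀.2.1.1.choose)
    rw [heval g η₀ _ (hrep η₀)] at this
    have h0 : g η₀ * prunedTotal Ω = 0 := this
    exact (mul_eq_zero.mp h0).resolve_right hFne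
  · apply le_antisymm
    · rw [Submodule.span_le]
      rintro - ⟨η, rfl⟩
      rw [SetLike.mem_coe, LinearMap.mem_ker, Matrix.mulVecLin_apply]
      exact hker η.1 η.2
    · intro x hx
      rw [LinearMap.mem_ker, Matrix.mulVecLin_apply] at hx
      have hxh : IsHarm Ω x := harm_of_ker Ω hx
      set c : {S : Set (Fin n) // IsBasin Ω S} → ℝ :=
        fun η => x (η.2.1.1.choose) / prunedTotal Ω with hc
      set y : Fin n → ℝ := ∑ η, c η • kappaP Ω η.1 with hy
      have hymem : y ∈ Submodule.span ℝ
          (Set.range fun η : {S : Set (Fin n) // IsBasin Ω S} => kappaP Ω η.1) := by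
        refine Submodule.sum_mem _ fun η _ => Submodule.smul_mem _ _ ?_
        exact Submodule.subset_span (Set.mem_range_self η)
      have hyh : IsHarm Ω y := by
        intro k
        have : Ωᵀ.mulVec y = 0 := by
          rw [hy]
          have : Ωᵀ.mulVec (∑ η, c η • kappaP Ω η.1)
              = ∑ η : {S : Set (Fin n) // IsBasin Ω S}, c η • Ωᵀ.mulVec (kappaP Ω η.1) := by
            rw [← Matrix.mulVecLin_apply, map_sum]
            exact Finset.sum_congr rfl fun η _ => by
              rw [LinearMap.map_smul, Matrix.mulVecLin_apply]
          rw [this]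
          refine Finset.sum_eq_zero fun η _ => ?_
          rw [hker η.1 η.2, smul_zero]
        exact harm_of_ker Ω this k
      have hzh : IsHarm Ω (x - y) := by
        intro k
        have h1 := hxh k
        have h2 := hyh k
        have : ∑ j, Ω j k * (x j - y j) = (∑ j, Ω j k * x j) - ∑ j, Ω j k * y j := by
          rw [← Finset.sum_sub_distrib]
          exact Finset.sum_congr rfl fun j _ => by ring
        simp only [Pi.sub_apply]
        rw [this, h1, h2, sub_zero]
      have hzB : ∀ v ∈ basinUnion Ω, (x - y) v = 0 := by
        rintro v ⟨T, hT, hvT⟩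
        have hyv : y v = c ⟨T, hT⟩ * prunedTotal Ω := heval c ⟨T, hT⟩ v hvT
        have hxv : x v = x ((⟨T, hT⟩ : {S : Set (Fin n) // IsBasin Ω S}).2.1.1.choose) :=
          basin_const Ω hoff hcol hT hxh v hvT _ (hrep ⟨T, hT⟩)
        simp only [Pi.sub_apply]
        rw [hyv, hc, hxv]
        field_simp
        ring
      have hz : x - y = 0 := harm_zero Ω hoff hcol hzh hzB
      have : x = y := by
        have := sub_eq_zero.mp hz
        exact this
      rw [this]
      exact hymem
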